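/- arXiv:2007.10383 — 2 statements merged into one kernel-verified Lean document; each statement's English description precedes it below -/
import Mathlib

section
/- Let R be a Noetherian integral domain and I a nonzero ideal of R such that R is not I-adically complete. Then the I-adic completion R̂^I is not a solid R-algebra; that is, every R-linear map R̂^I → R is zero. -/
universe u

open AdicCompletion

section Aux

variable {R : Type u} [CommRing R] (I : Ideal R)

theorem AdicSolidAux.smul_top_ideal_eq (n : ℕ) : (I ^ n • ⊤ : Ideal R) = I ^ n := by
  rw [smul_eq_mul, Ideal.mul_top]

variable [IsNoetherianRing R]

/-- If the `n`-th component of an element of the adic completion vanishes, the element lies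
in `I ^ n` times the completion. -/
theorem AdicSolidAux.mem_smul_top_of_val_eq_zero (n : ℕ) (x : AdicCompletion I R)
    (hx : x.val n = 0) : x ∈ (I ^ n • ⊤ : Submodule R (AdicCompletion I R)) := by
  classical
  set K : Submodule R R := (I ^ n • ⊤ : Ideal R) with hK
  have hexact := AdicCompletion.map_exact (I := I) K.injective_subtype
    (LinearMap.exact_subtype_mkQ K) K.mkQ_surjective
  have h0 : AdicCompletion.map I K.mkQ x = 0 := by
    ext m
    obtain ⟨r, hr⟩ := Submodule.Quotient.mk_surjective _ (x.val (max m n))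
    have h1 : x.val m = Submodule.Quotient.mk r := by
      rw [← x.2 (le_max_left m n), ← hr]; rfl
    have h2 : (Submodule.Quotient.mk r : R ⧸ (I ^ n • ⊤ : Submodule R R)) = 0 := by
      rw [← hx, ← x.2 (le_max_right m n), ← hr]; rfl
    have hrK : r ∈ K := by rwa [Submodule.Quotient.mk_eq_zero] at h2
    have hmkr : K.mkQ r = 0 := by
      rw [Submodule.mkQ_apply, Submodule.Quotient.mk_eq_zero]; exact hrK
    rw [AdicCompletion.map_val_apply, h1, LinearMap.reduceModIdeal_apply, hmkr,
      AdicCompletion.val_zero_apply, Submodule.Quotient.mk_zero]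
  obtain ⟨y, hy⟩ := (hexact x).mp h0
  obtain ⟨s, hs⟩ : K.FG := IsNoetherian.noetherian K
  let v : s → R := fun i => (i : R)
  let π : (s → R) →ₗ[R] R := Fintype.linearCombination R v
  have hπrange : LinearMap.range π = K := by
    rw [Fintype.range_linearCombination]
    have hv : Set.range v = (s : Set R) := Subtype.range_coe
    rw [hv, hs]
  have hmemπ : ∀ c, π c ∈ K := fun c => hπrange ▸ LinearMap.mem_range_self π c
  let p : (s → R) →ₗ[R] K := LinearMap.codRestrict K π hmemπ
  have hpsurj : Function.Surjective p := by
    rintro ⟨z, hz⟩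
    rw [← hπrange] at hz
    obtain ⟨c, hc⟩ := hz
    exact ⟨c, Subtype.ext hc⟩
  obtain ⟨z, hz⟩ := AdicCompletion.map_surjective I hpsurj y
  have hxz : x = AdicCompletion.map I π z := by
    have hcomp : K.subtype ∘ₗ p = π := LinearMap.subtype_comp_codRestrict (f := π) K hmemπ
    rw [← hy, ← hz, AdicCompletion.map_comp_apply, hcomp]
  have hsplit : AdicCompletion.map I π z
      = ∑ i : s, (i : R) • AdicCompletion.map I (LinearMap.proj i) z := by
    ext m
    obtain ⟨c, hc⟩ := Submodule.Quotient.mk_surjective _ (z.val m)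
    have hπc : π c = ∑ i : s, (i : R) • c i := by
      rw [Fintype.linearCombination_apply]
      exact Finset.sum_congr rfl (fun i _ => by simp [v, smul_eq_mul, mul_comm])
    rw [AdicCompletion.val_sum_apply]
    simp only [AdicCompletion.val_smul_apply, AdicCompletion.map_val_apply, ← hc,
      LinearMap.reduceModIdeal_apply, hπc, map_sum]
    rw [← Submodule.mkQ_apply, map_sum]
    refine Finset.sum_congr rfl (fun i _ => ?_)
    rw [map_smul, Submodule.mkQ_apply]
    rfl
  rw [hxz, hsplit]
  refine Submodule.sum_mem _ (fun i _ => Submodule.smul_mem_smul ?_ Submodule.mem_top)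
  have hi : (i : R) ∈ K := hs ▸ Submodule.subset_span i.2
  rwa [hK, AdicSolidAux.smul_top_ideal_eq] at hi

/-- Density of `R` in its adic completion. -/
theorem AdicSolidAux.exists_sub_algebraMap_mem (n : ℕ) (x : AdicCompletion I R) :
    ∃ r : R, x - algebraMap R (AdicCompletion I R) r
      ∈ (I ^ n • ⊤ : Submodule R (AdicCompletion I R)) := by
  obtain ⟨r, hr⟩ := Submodule.Quotient.mk_surjective _ (x.val n)
  refine ⟨r, AdicSolidAux.mem_smul_top_of_val_eq_zero I n _ ?_⟩
  have hval : (algebraMap R (AdicCompletion I R) r).val n = Submodule.Quotient.mk r := rfl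
  rw [AdicCompletion.val_sub_apply, hval, hr, sub_self]

end Aux

set_option maxHeartbeats 1000000 in
/-- **The adic completion of a non-complete Noetherian domain is not solid.**
Let `R` be a Noetherian integral domain and `I` a nonzero ideal such that `R` is not
`I`-adically complete (the canonical map `R → R̂^I` is not bijective).  Then every `R`-linear
map `R̂^I → R` is zero. -/
theorem adicCompletion_not_solid_of_domain
    (R : Type u) [CommRing R] [IsDomain R] [IsNoetherianRing R] (I : Ideal R) (hI : I ≠ ⊥)
    (hnotcomplete : ¬ Function.Bijective (algebraMap R (AdicCompletion I R)))
    (φ : AdicCompletion I R →ₗ[R] R) :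
    φ = 0 := by
  by_contra hφne
  set Hc := AdicCompletion I R with hHc
  set i : R →+* Hc := algebraMap R Hc with hi
  have hsmul : ∀ (r : R) (y : Hc), r • y = i r * y := fun r y => Algebra.smul_def r y
  -- the ideal `I` is proper
  have htop : I ≠ ⊤ := by
    rintro rfl
    apply hφne
    refine LinearMap.ext fun x => ?_
    have hx : x = 0 := by
      refine IsHausdorff.haus
        (inferInstance : IsHausdorff (⊤ : Ideal R) (AdicCompletion (⊤ : Ideal R) R)) x
        (fun n => ?_)
      rw [Ideal.top_pow, Submodule.top_smul]
      exact SModEq.top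
    rw [hx]
    simp
  -- the canonical map is injective
  have hinj : Function.Injective i := by
    have h0 : ∀ r : R, i r = 0 → r = 0 := by
      intro r hr
      have hmem : ∀ n : ℕ, r ∈ I ^ n := by
        intro n
        have : (i r).val n = 0 := by rw [hr]; rfl
        have hval : (Submodule.Quotient.mk r : R ⧸ (I ^ n • ⊤ : Submodule R R)) = 0 := this
        rw [Submodule.Quotient.mk_eq_zero] at hval
        rwa [AdicSolidAux.smul_top_ideal_eq] at hval
      have : r ∈ (⨅ n : ℕ, I ^ n) := Submodule.mem_iInf _ |>.mpr hmem
      rwa [Ideal.iInf_pow_eq_bot_of_isDomain I htop, Submodule.mem_bot] at this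
    intro a b hab
    have := h0 (a - b) (by rw [map_sub, hab, sub_self])
    exact sub_eq_zero.mp this
  set c := φ 1 with hc
  -- the key identity
  have hkey : ∀ x : Hc, i (φ x) = c • x := by
    intro x
    rw [← sub_eq_zero]
    refine IsHausdorff.haus (inferInstance : IsHausdorff I Hc) _ (fun n => SModEq.zero.mpr ?_)
    obtain ⟨r, hr⟩ := AdicSolidAux.exists_sub_algebraMap_mem I n x
    set y := x - i r with hy
    have hφy : φ y ∈ I ^ n := by
      have h1 : φ y ∈ Submodule.map φ (I ^ n • ⊤ : Submodule R Hc) :=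
        Submodule.mem_map_of_mem hr
      rw [Submodule.map_smul''] at h1
      have h2 : I ^ n • Submodule.map φ ⊤ ≤ (I ^ n • ⊤ : Submodule R R) :=
        Submodule.smul_mono le_rfl le_top
      have h3 := h2 h1
      rwa [AdicSolidAux.smul_top_ideal_eq] at h3
    have hφx : φ x = r * c + φ y := by
      have hx : x = i r + y := by rw [hy]; ring
      rw [hx, map_add]
      congr 1
      rw [hi, Algebra.algebraMap_eq_smul_one, map_smul, hc, smul_eq_mul]
    have heq : i (φ x) - c • x = i (φ y) - c • y := by
      have hx : x = i r + y := by rw [hy]; ring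
      rw [hφx, hx, map_add, smul_add]
      have : i (r * c) = c • i r := by
        rw [map_mul, Algebra.smul_def, mul_comm]
      rw [this]
      abel
    rw [heq]
    refine sub_mem ?_ (Submodule.smul_mem _ c hr)
    have : i (φ y) = (φ y) • (1 : Hc) := by rw [hi, Algebra.algebraMap_eq_smul_one]
    rw [this]
    exact Submodule.smul_mem_smul hφy Submodule.mem_top
  -- φ 1 ≠ 0
  have hcne : c ≠ 0 := by
    intro h0
    apply hφne
    refine LinearMap.ext fun x => ?_
    have := hkey x
    rw [h0, zero_smul] at this
    have h2 := hinj (this.trans (_root_.map_zero i).symm)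
    simpa using h2
  -- flatness gives that `c` acts regularly on the completion
  haveI hflat : Module.Flat R Hc := (AdicCompletion.flat_of_isNoetherian (I := I))
  have hregR : IsSMulRegular R c := fun a b hab => by
    have : c * a = c * b := by simpa [smul_eq_mul] using hab
    exact mul_left_cancel₀ hcne this
  have hreg : IsSMulRegular Hc c := by
    have hT : IsSMulRegular (TensorProduct R Hc R) c := hregR.lTensor Hc
    intro a b hab
    have hab' : c • a = c • b := hab
    let e := TensorProduct.rid R Hc
    have h1 : c • e.symm a = c • e.symm b := by
      rw [← map_smul, ← map_smul, hab']
    exact e.symm.injective (hT h1)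
  -- φ is injective, hence the completion is module-finite over R
  have hφinj : Function.Injective φ := by
    intro a b hab
    apply hreg
    show c • a = c • b
    rw [← hkey a, ← hkey b, hab]
  haveI hfin : Module.Finite R Hc := by
    have h1 : Module.Finite R (LinearMap.range φ) :=
      Module.Finite.iff_fg.mpr (IsNoetherian.noetherian _)
    exact Module.Finite.equiv (LinearEquiv.ofInjective φ hφinj).symm
  -- Nakayama: some `1 - a`, `a ∈ I`, maps the completion into the image of `R`
  set iₗ : R →ₗ[R] Hc := Algebra.linearMap R Hc with hil
  set Q := Hc ⧸ LinearMap.range iₗ with hQ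
  haveI : Module.Finite R Q := Module.Finite.quotient R _
  have hle : (⊤ : Submodule R Q) ≤ I • ⊤ := by
    intro q _
    obtain ⟨x, rfl⟩ := Submodule.Quotient.mk_surjective _ q
    obtain ⟨r, hr⟩ := AdicSolidAux.exists_sub_algebraMap_mem I 1 x
    rw [pow_one] at hr
    have h1 : (Submodule.Quotient.mk x : Q) = Submodule.Quotient.mk (x - i r) := by
      rw [Submodule.Quotient.eq]
      refine ⟨r, ?_⟩
      simp [hil, hi, sub_sub_cancel]
    rw [h1]
    have h2 : Submodule.Quotient.mk (x - i r)
        ∈ Submodule.map (LinearMap.range iₗ).mkQ (I • ⊤ : Submodule R Hc) :=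
      Submodule.mem_map_of_mem hr
    rw [Submodule.map_smul'', Submodule.map_top, Submodule.range_mkQ] at h2
    exact h2
  obtain ⟨a, haI, ha⟩ := Submodule.exists_mem_and_smul_eq_self_of_fg_of_le_smul I
    (⊤ : Submodule R Q) (Module.finite_def.mp inferInstance) hle
  -- hence every `(1 - i a) * x` is in the image of `R`
  have hres : ∀ x : Hc, ∃ r : R, (1 - i a) * x = i r := by
    intro x
    have h1 : a • (Submodule.Quotient.mk x : Q) = Submodule.Quotient.mk x :=
      ha _ Submodule.mem_top
    rw [← Submodule.Quotient.mk_smul, Submodule.Quotient.eq] at h1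
    obtain ⟨r, hr⟩ := h1
    refine ⟨-r, ?_⟩
    have h2 : i r = a • x - x := hr
    rw [map_neg, h2, neg_sub, sub_mul, one_mul, hsmul a x]
  -- the geometric series inverts `1 - i a`
  set g : ℕ → R := fun n => ∑ k ∈ Finset.range n, a ^ k with hg
  have hgc : ∀ n, g n ≡ g (n + 1) [SMOD (I ^ n • ⊤ : Submodule R R)] := by
    intro n
    rw [SModEq.sub_mem]
    have : g n - g (n + 1) = -(a ^ n) := by
      rw [hg]
      simp [Finset.sum_range_succ]
    rw [this, AdicSolidAux.smul_top_ideal_eq]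
    exact neg_mem (Ideal.pow_mem_pow haI n)
  set b : Hc := AdicCompletion.mk I R (AdicCauchySequence.mk I R g hgc) with hb
  have hub : (1 - i a) * b = 1 := by
    have h1 : ∀ n : ℕ, (1 - a) * g n - 1 ∈ (I ^ n • ⊤ : Ideal R) := by
      intro n
      have h := geom_sum_mul a n
      have h2 : (1 - a) * g n - 1 = -(a ^ n) := by rw [hg]; linear_combination -h
      rw [h2, AdicSolidAux.smul_top_ideal_eq]
      exact neg_mem (Ideal.pow_mem_pow haI n)
    ext n
    have hvb : b.val n = Ideal.Quotient.mk (I ^ n • ⊤ : Ideal R) (g n) := rfl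
    have hva : (i a).val n = Ideal.Quotient.mk (I ^ n • ⊤ : Ideal R) a := rfl
    rw [AdicCompletion.val_mul, AdicCompletion.val_sub_apply, AdicCompletion.val_one, hvb, hva]
    rw [show (1 : R ⧸ (I ^ n • ⊤ : Ideal R)) = Ideal.Quotient.mk _ (1 : R) from rfl]
    rw [← map_sub, ← map_mul, Ideal.Quotient.eq]
    exact h1 n
  -- b is in the image of R
  obtain ⟨t, ht⟩ := hres (b * b)
  have hbt : b = i t := by
    have h1 : (1 - i a) * (b * b) = b := by
      rw [← mul_assoc, hub, one_mul]
    rw [← h1, ht]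
  -- the canonical map is surjective
  have hsurj : Function.Surjective i := by
    intro x
    obtain ⟨r, hr⟩ := hres x
    refine ⟨t * r, ?_⟩
    rw [map_mul, ← hbt, ← hr, ← mul_assoc, mul_comm b (1 - i a), hub, one_mul]
  exact hnotcomplete ⟨hinj, hsurj⟩
end

section
/- Let R be a Noetherian commutative ring and I an ideal of R. For every R-linear map φ : R̂^I → R from the I-adic completion of R, the image of the multiplication-by-φ(1) map on R̂^I lands in the image of the canonical map; that is, for every x ∈ R̂^I there exists r ∈ R with φ(1)·x = i(r), where i : R → R̂^I is the canonical map. -/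
universe u

open AdicCompletion TensorProduct LinearMap

lemma aux_smul_top_eq (R : Type u) [CommRing R] (I : Ideal R) (n : ℕ) :
    (I ^ n • ⊤ : Submodule R R) = (I ^ n : Submodule R R) := by
  rw [smul_eq_mul, Ideal.mul_top]

/-- Any element of the kernel of `eval n` lies in `I^n • ⊤`. -/
lemma aux_ker_eval (R : Type u) [CommRing R] [IsNoetherianRing R] (I : Ideal R) (n : ℕ)
    (z : AdicCompletion I R) (hz : AdicCompletion.eval I R n z = 0) :
    z ∈ (I ^ n • ⊤ : Submodule R (AdicCompletion I R)) := by
  obtain ⟨a, rfl⟩ := AdicCompletion.mk_surjective I R z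
  set J : Submodule R R := (I ^ n • ⊤ : Submodule R R) with hJ
  have han : a.val n ∈ J := by
    rw [← Submodule.Quotient.mk_eq_zero]
    exact hz
  -- membership of a m in J for all m via cauchy property
  have hker : AdicCompletion.map I J.mkQ (AdicCompletion.mk I R a) = 0 := by
    ext m
    rw [AdicCompletion.map_val_apply]
    have : (AdicCompletion.mk I R a).val m
        = Submodule.mkQ (I ^ m • ⊤ : Submodule R R) (a.val m) := rfl
    rw [this, Submodule.mkQ_apply, LinearMap.reduceModIdeal_apply, AdicCompletion.val_zero]
    rw [Pi.zero_apply, Submodule.Quotient.mk_eq_zero]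
    have h1 : a.val m - a.val (max m n) ∈ (I ^ m • ⊤ : Submodule R R) :=
      SModEq.sub_mem.mp (a.property (le_max_left m n))
    have h2 : a.val (max m n) ∈ J := by
      have h3 : a.val n - a.val (max m n) ∈ J :=
        SModEq.sub_mem.mp (a.property (le_max_right m n))
      have := J.sub_mem han h3
      simpa using this
    have hdec : a.val m = (a.val m - a.val (max m n)) + a.val (max m n) := by ring
    rw [hdec, map_add]
    have hz2 : J.mkQ (a.val (max m n)) = 0 := by
      rw [Submodule.mkQ_apply, Submodule.Quotient.mk_eq_zero]; exact h2
    rw [hz2, add_zero]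
    refine Submodule.smul_induction_on h1 (fun r hr y _ ↦ ?_) (fun y z hy hz ↦ ?_)
    · rw [map_smul]
      exact Submodule.smul_mem_smul hr Submodule.mem_top
    · rw [map_add]; exact Submodule.add_mem _ hy hz
  -- exactness
  have hexact := AdicCompletion.map_exact (I := I) (Submodule.injective_subtype J)
    (LinearMap.exact_subtype_mkQ J) (Submodule.mkQ_surjective J)
  obtain ⟨w, hw⟩ := (hexact _).mp hker
  -- tensor product description
  haveI : Module.Finite R J := Module.Finite.iff_fg.mpr (IsNoetherian.noetherian J)
  obtain ⟨t, rfl⟩ := (AdicCompletion.ofTensorProduct_bijective_of_finite_of_isNoetherian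
    I J).surjective w
  rw [← LinearMap.comp_apply, AdicCompletion.ofTensorProduct_naturality I J.subtype] at hw
  rw [← hw]
  clear hw hker
  induction t with
  | zero => simp
  | add s t hs ht => rw [map_add]; exact Submodule.add_mem _ hs ht
  | tmul c m =>
      simp only [LinearMap.comp_apply, AlgebraTensorModule.map_tmul, LinearMap.id_coe, id_eq,
        AdicCompletion.ofTensorProduct_tmul, Submodule.coe_subtype]
      have hm : (m : R) ∈ (I ^ n : Ideal R) := by
        have h : (m : R) ∈ (I ^ n • ⊤ : Submodule R R) := m.2
        rwa [aux_smul_top_eq] at h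
      have : c • AdicCompletion.of I R (m : R) = (m : R) • c := by
        show c * algebraMap R (AdicCompletion I R) (m : R) = (m : R) • c
        rw [Algebra.smul_def, mul_comm]
      erw [this]
      exact Submodule.smul_mem_smul hm Submodule.mem_top


/-- **Multiplication by `φ 1` maps the adic completion into the image of `R`.**
Let `R` be a Noetherian ring and `I` an ideal.  For every `R`-linear map `φ : R̂^I → R` from
the `I`-adic completion and every `x ∈ R̂^I`, there exists `r ∈ R` with
`φ 1 • x = i r`, where `i : R → R̂^I` is the canonical map. -/
theorem adicCompletion_hom_apply_one_mul_mem_range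
    (R : Type u) [CommRing R] [IsNoetherianRing R] (I : Ideal R)
    (φ : AdicCompletion I R →ₗ[R] R) (x : AdicCompletion I R) :
    ∃ r : R, φ 1 • x = algebraMap R (AdicCompletion I R) r := by
  refine ⟨φ x, ?_⟩
  have key : ∀ n : ℕ, φ 1 • x - algebraMap R (AdicCompletion I R) (φ x)
      ∈ (I ^ n • ⊤ : Submodule R (AdicCompletion I R)) := by
    intro n
    obtain ⟨r, hr⟩ := Submodule.Quotient.mk_surjective _ (x.val n)
    have hd : x - algebraMap R (AdicCompletion I R) r
        ∈ (I ^ n • ⊤ : Submodule R (AdicCompletion I R)) := by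
      apply aux_ker_eval
      show x.val n - (algebraMap R (AdicCompletion I R) r).val n = 0
      have : (algebraMap R (AdicCompletion I R) r).val n
          = Submodule.mkQ (I ^ n • ⊤ : Submodule R R) r := rfl
      rw [this, Submodule.mkQ_apply, hr, sub_self]
    set d := x - algebraMap R (AdicCompletion I R) r with hdef
    have hx : x = algebraMap R (AdicCompletion I R) r + d := by rw [hdef]; ring
    have hφd : φ d ∈ (I ^ n : Ideal R) := by
      have : φ d ∈ Submodule.map φ (I ^ n • ⊤ : Submodule R (AdicCompletion I R)) :=
        Submodule.mem_map_of_mem hd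
      rw [Submodule.map_smul''] at this
      have h2 : (I ^ n • Submodule.map φ ⊤ : Submodule R R) ≤ I ^ n • ⊤ :=
        Submodule.smul_mono le_rfl le_top
      have := h2 this
      rwa [aux_smul_top_eq] at this
    have hφx : φ x = r * φ 1 + φ d := by
      rw [hx, map_add]
      congr 1
      have : algebraMap R (AdicCompletion I R) r = r • (1 : AdicCompletion I R) := by
        rw [Algebra.smul_def, mul_one]
      rw [this, map_smul, smul_eq_mul]
    have expand : φ 1 • x - algebraMap R (AdicCompletion I R) (φ x)
        = φ 1 • d - algebraMap R (AdicCompletion I R) (φ d) := by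
      rw [hφx, hx, smul_add, map_add]
      have : φ 1 • algebraMap R (AdicCompletion I R) r
          = algebraMap R (AdicCompletion I R) (r * φ 1) := by
        rw [Algebra.smul_def, ← map_mul, mul_comm]
      rw [this]
      ring
    rw [expand]
    refine Submodule.sub_mem _ (Submodule.smul_mem _ _ hd) ?_
    have : algebraMap R (AdicCompletion I R) (φ d) = φ d • (1 : AdicCompletion I R) := by
      rw [Algebra.smul_def, mul_one]
    rw [this]
    exact Submodule.smul_mem_smul hφd Submodule.mem_top
  have := IsHausdorff.haus (inferInstance : IsHausdorff I (AdicCompletion I R))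
    (φ 1 • x - algebraMap R (AdicCompletion I R) (φ x))
    (fun n ↦ (SModEq.zero).mpr (key n))
  exact sub_eq_zero.mp this
end
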